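/- For all n ≥ t ≥ ℓ ≥ 1, the minimum size C(n,t,ℓ) of an (n,t,ℓ)-covering design satisfies C(n,t,ℓ) ≤ (1 + ln(C(t,ℓ))) · C(n,ℓ)/C(t,ℓ), where C(a,b) denotes the binomial coefficient. -/

import Mathlib

open Finset

noncomputable def Hh (a : ℕ) : ℝ := ∑ j ∈ Finset.range a, ((j : ℝ) + 1)⁻¹

lemma Hh_mono {a b : ℕ} (h : a ≤ b) : Hh a ≤ Hh b := by
  apply Finset.sum_le_sum_of_subset_of_nonneg (Finset.range_subset_range.mpr h)
  intro j _ _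
  positivity

lemma Hh_nonneg (a : ℕ) : 0 ≤ Hh a := by
  have := Hh_mono (Nat.zero_le a)
  simpa [Hh] using this

lemma Hh_diff {a' a g : ℕ} (h1 : a' ≤ a) (h2 : a ≤ g) (hg : 0 < g) :
    ((a : ℝ) - a') / g ≤ Hh a - Hh a' := by
  rw [Hh, Hh, ← Finset.sum_Ico_eq_sub _ h1]
  have hconst : ((a : ℝ) - a') / g = ∑ _j ∈ Finset.Ico a' a, (g : ℝ)⁻¹ := by
    rw [Finset.sum_const, Nat.card_Ico, nsmul_eq_mul, Nat.cast_sub h1, div_eq_mul_inv]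
  rw [hconst]
  apply Finset.sum_le_sum
  intro j hj
  have hj2 : j + 1 ≤ g := le_trans (Finset.mem_Ico.mp hj).2 h2
  have hj3 : ((j : ℝ) + 1) ≤ g := by exact_mod_cast hj2
  exact inv_anti₀ (by positivity) hj3

lemma Hh_le_one_add_log {a : ℕ} : Hh a ≤ 1 + Real.log a := by
  have h1 : Hh a = ((harmonic a : ℚ) : ℝ) := by
    rw [Hh, harmonic]
    push_cast
    rfl
  rw [h1]
  exact harmonic_le_one_add_log a

lemma greedy_cover {ι β : Type*} [DecidableEq β] [DecidableEq ι] (𝒞 : Finset ι)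
    (cov : ι → Finset β) (r : ℕ) (hr : 0 < r) (U : Finset β) :
    (∀ e ∈ U, r ≤ (𝒞.filter fun T => e ∈ cov T).card) →
    ∃ S ⊆ 𝒞, (∀ e ∈ U, ∃ T ∈ S, e ∈ cov T) ∧
      (S.card : ℝ) * r ≤ ∑ T ∈ 𝒞, Hh ((cov T ∩ U).card) := by
  induction U using Finset.strongInduction with
  | _ U ih =>
    intro hcov
    rcases U.eq_empty_or_nonempty with rfl | ⟨e, he⟩
    · refine ⟨∅, Finset.empty_subset _, by simp, ?_⟩
      simp only [Finset.card_empty, Nat.cast_zero, zero_mul, Finset.inter_empty]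
      exact Finset.sum_nonneg fun T _ => Hh_nonneg _
    · have hfe : 0 < (𝒞.filter fun T => e ∈ cov T).card := lt_of_lt_of_le hr (hcov e he)
      obtain ⟨T₁, hT₁⟩ := Finset.card_pos.mp hfe
      have hT₁' := Finset.mem_filter.mp hT₁
      obtain ⟨T₀, hT₀𝒞, hmax⟩ := 𝒞.exists_max_image (fun T => (cov T ∩ U).card) ⟨T₁, hT₁'.1⟩
      set W := cov T₀ ∩ U with hW
      have hg : 0 < W.card := by
        have h1 : 0 < (cov T₁ ∩ U).card :=
          Finset.card_pos.mpr ⟨e, Finset.mem_inter.mpr ⟨hT₁'.2, he⟩⟩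
        exact lt_of_lt_of_le h1 (hmax T₁ hT₁'.1)
      set U' := U \ cov T₀ with hU'
      have hss : U' ⊂ U := by
        obtain ⟨w, hw⟩ := Finset.card_pos.mp hg
        have hw' := Finset.mem_inter.mp hw
        refine Finset.ssubset_iff_of_subset (Finset.sdiff_subset) |>.mpr ?_
        exact ⟨w, hw'.2, by simp [hU', hw'.1]⟩
      obtain ⟨S', hS'sub, hS'cov, hS'card⟩ :=
        ih U' hss (fun x hx => hcov x (Finset.mem_sdiff.mp hx).1)
      refine ⟨insert T₀ S', Finset.insert_subset hT₀𝒞 hS'sub, ?_, ?_⟩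
      · intro x hx
        by_cases hx0 : x ∈ cov T₀
        · exact ⟨T₀, Finset.mem_insert_self _ _, hx0⟩
        · obtain ⟨T, hT, h⟩ := hS'cov x (Finset.mem_sdiff.mpr ⟨hx, hx0⟩)
          exact ⟨T, Finset.mem_insert_of_mem hT, h⟩
      · -- split of the intersection
        have hsplit : ∀ T, (cov T ∩ U).card = (cov T ∩ U').card + (cov T ∩ W).card := by
          intro T
          have hdisj : Disjoint (cov T ∩ U') (cov T ∩ W) := by
            apply Finset.disjoint_left.mpr
            intro x hx1 hx2
            have h1 := Finset.mem_inter.mp hx1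
            have h2 := Finset.mem_inter.mp hx2
            exact (Finset.mem_sdiff.mp h1.2).2 (Finset.mem_inter.mp h2.2).1
          have hunion : cov T ∩ U = (cov T ∩ U') ∪ (cov T ∩ W) := by
            rw [← Finset.inter_union_distrib_left]
            congr 1
            rw [hU', hW]
            ext x
            simp only [Finset.mem_union, Finset.mem_sdiff, Finset.mem_inter]
            tauto
          rw [hunion, Finset.card_union_of_disjoint hdisj]
        -- double counting
        have hdc : W.card * r ≤ ∑ T ∈ 𝒞, (cov T ∩ W).card := by
          have h1 : ∀ T, (cov T ∩ W).card = ∑ x ∈ W, if x ∈ cov T then 1 else 0 := by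
            intro T
            rw [Finset.inter_comm, ← Finset.filter_mem_eq_inter, Finset.card_filter]
          calc W.card * r = ∑ _x ∈ W, r := by rw [Finset.sum_const, smul_eq_mul]
            _ ≤ ∑ x ∈ W, (𝒞.filter fun T => x ∈ cov T).card := by
                apply Finset.sum_le_sum
                intro x hx
                exact hcov x (Finset.mem_inter.mp hx).2
            _ = ∑ x ∈ W, ∑ T ∈ 𝒞, (if x ∈ cov T then 1 else 0) := by
                apply Finset.sum_congr rfl
                intro x _
                rw [Finset.card_filter]
            _ = ∑ T ∈ 𝒞, ∑ x ∈ W, (if x ∈ cov T then 1 else 0) := Finset.sum_comm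
            _ = ∑ T ∈ 𝒞, (cov T ∩ W).card := by
                apply Finset.sum_congr rfl
                intro T _
                rw [h1]
        -- key inequality
        have hkey : (r : ℝ) + ∑ T ∈ 𝒞, Hh ((cov T ∩ U').card)
            ≤ ∑ T ∈ 𝒞, Hh ((cov T ∩ U).card) := by
          have h2 : ∀ T ∈ 𝒞, ((cov T ∩ W).card : ℝ) / W.card
              ≤ Hh ((cov T ∩ U).card) - Hh ((cov T ∩ U').card) := by
            intro T hT
            have h3 : (cov T ∩ U').card ≤ (cov T ∩ U).card := by
              rw [hsplit T]; omega
            have h4 := Hh_diff h3 (hmax T hT) hg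
            have h5 : ((cov T ∩ U).card : ℝ) - ((cov T ∩ U').card : ℝ)
                = ((cov T ∩ W).card : ℝ) := by
              rw [hsplit T]; push_cast; ring
            rwa [h5] at h4
          have h6 : (r : ℝ) ≤ ∑ T ∈ 𝒞, (((cov T ∩ W).card : ℝ) / W.card) := by
            rw [← Finset.sum_div]
            rw [le_div_iff₀ (by exact_mod_cast hg)]
            calc (r : ℝ) * W.card = ((W.card * r : ℕ) : ℝ) := by push_cast; ring
              _ ≤ ((∑ T ∈ 𝒞, (cov T ∩ W).card : ℕ) : ℝ) := by exact_mod_cast hdc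
              _ = ∑ T ∈ 𝒞, ((cov T ∩ W).card : ℝ) := by push_cast; rfl
          have h7 := Finset.sum_le_sum h2
          rw [Finset.sum_sub_distrib] at h7
          linarith [h6.trans h7]
        have hcard : ((insert T₀ S').card : ℝ) ≤ (S'.card : ℝ) + 1 := by
          exact_mod_cast Finset.card_insert_le _ _
        have hrR : (0:ℝ) ≤ r := by positivity
        calc ((insert T₀ S').card : ℝ) * r ≤ ((S'.card : ℝ) + 1) * r :=
              mul_le_mul_of_nonneg_right hcard hrR
          _ = (S'.card : ℝ) * r + r := by ring
          _ ≤ (∑ T ∈ 𝒞, Hh ((cov T ∩ U').card)) + r := by linarith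
          _ ≤ ∑ T ∈ 𝒞, Hh ((cov T ∩ U).card) := by linarith

lemma count_supersets {n t ℓ : ℕ} (hℓt : ℓ ≤ t) (htn : t ≤ n) (e : Finset (Fin n))
    (he : e.card = ℓ) :
    ((Finset.univ.powersetCard t : Finset (Finset (Fin n))).filter fun T => e ⊆ T).card
      = (n - ℓ).choose (t - ℓ) := by
  have hcu : ((Finset.univ : Finset (Fin n)) \ e).card = n - ℓ := by
    rw [Finset.card_sdiff_of_subset (Finset.subset_univ e), Finset.card_univ, Fintype.card_fin, he]
  rw [← hcu, ← Finset.card_powersetCard (t - ℓ) (Finset.univ \ e)]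
  apply Finset.card_nbij' (fun T => T \ e) (fun S => S ∪ e)
  · intro T hT
    have hT' := Finset.mem_filter.mp hT
    have hmem := Finset.mem_powersetCard.mp hT'.1
    simp only [Finset.mem_coe, Finset.mem_powersetCard]
    constructor
    · exact Finset.sdiff_subset_sdiff (Finset.subset_univ T) (Finset.Subset.refl e)
    · rw [Finset.card_sdiff_of_subset hT'.2, hmem.2, he]
  · intro S hS
    have hmem := Finset.mem_powersetCard.mp hS
    have hdisj : Disjoint S e := by
      apply Finset.disjoint_left.mpr
      intro x hx
      exact (Finset.mem_sdiff.mp (hmem.1 hx)).2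
    simp only [Finset.mem_coe, Finset.mem_filter, Finset.mem_powersetCard]
    refine ⟨⟨Finset.subset_univ _, ?_⟩, Finset.subset_union_right⟩
    rw [Finset.card_union_of_disjoint hdisj, hmem.2, he]
    omega
  · intro T hT
    have hT' := Finset.mem_filter.mp hT
    exact Finset.sdiff_union_of_subset hT'.2
  · intro S hS
    have hmem := Finset.mem_powersetCard.mp hS
    have hdisj : Disjoint S e := by
      apply Finset.disjoint_left.mpr
      intro x hx
      exact (Finset.mem_sdiff.mp (hmem.1 hx)).2
    show (S ∪ e) \ e = S
    rw [Finset.union_sdiff_distrib, Finset.sdiff_self, Finset.union_empty,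
      Finset.sdiff_eq_self_of_disjoint hdisj]

/-- An `(n,t,ℓ)`-covering design: a family of `t`-subsets of `Fin n` such that every
`ℓ`-subset is contained in some member. -/
def IsCoveringDesign (n t ℓ : ℕ) (F : Finset (Finset (Fin n))) : Prop :=
  (∀ T ∈ F, T.card = t) ∧
  ∀ S : Finset (Fin n), S.card = ℓ → ∃ T ∈ F, S ⊆ T

/-- Erdős–Spencer bound: there is an `(n,t,ℓ)`-covering design of size at most
`(1 + ln (t choose ℓ)) * (n choose ℓ) / (t choose ℓ)`. -/
theorem covering_design_bound (n t ℓ : ℕ) (hℓ : 1 ≤ ℓ) (hℓt : ℓ ≤ t) (htn : t ≤ n) :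
    ∃ F : Finset (Finset (Fin n)), IsCoveringDesign n t ℓ F ∧
      (F.card : ℝ) ≤ (1 + Real.log (Nat.choose t ℓ)) *
        (Nat.choose n ℓ : ℝ) / (Nat.choose t ℓ : ℝ) := by
  have hr : 0 < (n - ℓ).choose (t - ℓ) := Nat.choose_pos (Nat.sub_le_sub_right htn ℓ)
  have hk : 0 < t.choose ℓ := Nat.choose_pos hℓt
  have hcov : ∀ e ∈ (Finset.univ.powersetCard ℓ : Finset (Finset (Fin n))),
      (n - ℓ).choose (t - ℓ) ≤
        (((Finset.univ.powersetCard t : Finset (Finset (Fin n))).filter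
          fun T => e ∈ T.powersetCard ℓ)).card := by
    intro e he
    have he' := Finset.mem_powersetCard.mp he
    have hfeq : ((Finset.univ.powersetCard t : Finset (Finset (Fin n))).filter
        fun T => e ∈ T.powersetCard ℓ)
        = ((Finset.univ.powersetCard t : Finset (Finset (Fin n))).filter fun T => e ⊆ T) := by
      apply Finset.filter_congr
      intro T _
      simp [Finset.mem_powersetCard, he'.2]
    rw [hfeq, count_supersets hℓt htn e he'.2]
  obtain ⟨S, hS𝒞, hScov, hScard⟩ := greedy_cover (Finset.univ.powersetCard t)
    (fun T => T.powersetCard ℓ) ((n - ℓ).choose (t - ℓ)) hr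
    (Finset.univ.powersetCard ℓ) hcov
  refine ⟨S, ⟨fun T hT => (Finset.mem_powersetCard.mp (hS𝒞 hT)).2, ?_⟩, ?_⟩
  · intro e hec
    obtain ⟨T, hT, hmem⟩ := hScov e (Finset.mem_powersetCard.mpr ⟨Finset.subset_univ _, hec⟩)
    exact ⟨T, hT, (Finset.mem_powersetCard.mp hmem).1⟩
  · -- bound the sum
    have hsum : ∑ T ∈ (Finset.univ.powersetCard t : Finset (Finset (Fin n))),
        Hh ((T.powersetCard ℓ ∩ Finset.univ.powersetCard ℓ).card)
        ≤ (n.choose t : ℝ) * (1 + Real.log (t.choose ℓ)) := by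
      have hcardC : (Finset.univ.powersetCard t : Finset (Finset (Fin n))).card = n.choose t := by
        rw [Finset.card_powersetCard, Finset.card_univ, Fintype.card_fin]
      calc ∑ T ∈ (Finset.univ.powersetCard t : Finset (Finset (Fin n))),
            Hh ((T.powersetCard ℓ ∩ Finset.univ.powersetCard ℓ).card)
          ≤ ∑ _T ∈ (Finset.univ.powersetCard t : Finset (Finset (Fin n))),
            (1 + Real.log (t.choose ℓ)) := by
            apply Finset.sum_le_sum
            intro T hT
            have hTc := Finset.mem_powersetCard.mp hT
            have h1 : (T.powersetCard ℓ ∩ Finset.univ.powersetCard ℓ).card ≤ t.choose ℓ := by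
              calc (T.powersetCard ℓ ∩ Finset.univ.powersetCard ℓ).card
                  ≤ (T.powersetCard ℓ).card :=
                    Finset.card_le_card Finset.inter_subset_left
                _ = t.choose ℓ := by rw [Finset.card_powersetCard, hTc.2]
            exact (Hh_mono h1).trans Hh_le_one_add_log
        _ = (n.choose t : ℝ) * (1 + Real.log (t.choose ℓ)) := by
            rw [Finset.sum_const, hcardC, nsmul_eq_mul]
    have hmain : (S.card : ℝ) * ((n - ℓ).choose (t - ℓ)) ≤
        (n.choose t : ℝ) * (1 + Real.log (t.choose ℓ)) := hScard.trans hsum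
    have hid : (n.choose t : ℝ) * (t.choose ℓ) = (n.choose ℓ : ℝ) * ((n - ℓ).choose (t - ℓ)) := by
      exact_mod_cast Nat.choose_mul (n := n) hℓt
    have hlog : (0:ℝ) ≤ 1 + Real.log (t.choose ℓ) := by
      have : (1:ℝ) ≤ (t.choose ℓ : ℝ) := by exact_mod_cast hk
      have := Real.log_nonneg this
      linarith
    have hkR : (0:ℝ) < (t.choose ℓ : ℝ) := by exact_mod_cast hk
    have hrR : (0:ℝ) < ((n - ℓ).choose (t - ℓ) : ℝ) := by exact_mod_cast hr
    rw [le_div_iff₀ hkR]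
    rw [← mul_le_mul_iff_of_pos_right hrR]
    calc (S.card : ℝ) * (t.choose ℓ) * ((n - ℓ).choose (t - ℓ))
        = ((S.card : ℝ) * ((n - ℓ).choose (t - ℓ))) * (t.choose ℓ) := by ring
      _ ≤ ((n.choose t : ℝ) * (1 + Real.log (t.choose ℓ))) * (t.choose ℓ) :=
          mul_le_mul_of_nonneg_right hmain (le_of_lt hkR)
      _ = (1 + Real.log (t.choose ℓ)) * ((n.choose t : ℝ) * (t.choose ℓ)) := by ring
      _ = (1 + Real.log (t.choose ℓ)) * ((n.choose ℓ : ℝ) * ((n - ℓ).choose (t - ℓ))) := by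
          rw [hid]
      _ = (1 + Real.log (t.choose ℓ)) * (n.choose ℓ : ℝ) * ((n - ℓ).choose (t - ℓ)) := by ring
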